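/- Let {t_n}_{n=0}^∞ be a Stieltjes moment sequence and let ϑ > 0; set t_{-1} = ϑ, and suppose {t_{n-1}}_{n=0}^∞ is a Stieltjes moment sequence. Let M₀(ϑ) be the set of representing measures μ of {t_n}_{n=0}^∞ with ∫_{[0,∞)} (1/s) dμ(s) ≤ ϑ, and let M₋₁(ϑ) be the set of all representing measures of {t_{n-1}}_{n=0}^∞. Then the mapping M₀(ϑ) ∋ μ ↦ ν_μ ∈ M₋₁(ϑ), where ν_μ(σ) = ∫_σ (1/s) dμ(s) + (ϑ − ∫_{[0,∞)} (1/s) dμ(s)) δ₀(σ) for Borel sets σ ⊆ [0,∞), is a well-defined bijection whose inverse M₋₁(ϑ) ∋ ν ↦ μ_ν ∈ M₀(ϑ) is given by μ_ν(σ) = ∫_σ s dν(s). Moreover, if in addition {t_n}_{n=0}^∞ is determinate, then {t_{n-1}}_{n=0}^∞ is determinate, the unique representing measure μ of {t_n}_{n=0}^∞ satisfies ∫_{[0,∞)} (1/s) dμ(s) ≤ ϑ, and ν_μ is the unique representing measure of {t_{n-1}}_{n=0}^∞. -/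

import Mathlib

open MeasureTheory ENNReal
open scoped NNReal
noncomputable section

/-- `μ` is a representing measure of the sequence `t`. -/
def IsRepMeasure (μ : Measure ℝ≥0) (t : ℕ → ℝ) : Prop :=
  ∀ n : ℕ, Integrable (fun s : ℝ≥0 => (s : ℝ) ^ n) μ ∧ t n = ∫ s, (s : ℝ) ^ n ∂μ

/-- `t` is a Stieltjes moment sequence. -/
def IsStieltjesMoment (t : ℕ → ℝ) : Prop := ∃ μ : Measure ℝ≥0, IsRepMeasure μ t

/-- `t` is a determinate Stieltjes moment sequence. -/
def IsDetStieltjesMoment (t : ℕ → ℝ) : Prop := ∃! μ : Measure ℝ≥0, IsRepMeasure μ t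

section Operators

universe u
variable {H : Type u} [NormedAddCommGroup H] [InnerProductSpace ℂ H]

/-- The maximal domain of the composition `S ∘ T`. -/
def compDomain (S T : H →ₗ.[ℂ] H) : Submodule ℂ H where
  carrier := {x | ∃ hx : x ∈ T.domain, T ⟨x, hx⟩ ∈ S.domain}
  zero_mem' := ⟨T.domain.zero_mem, by
    have h0 : (⟨0, T.domain.zero_mem⟩ : T.domain) = 0 := rfl
    rw [h0, LinearPMap.map_zero]; exact S.domain.zero_mem⟩
  add_mem' := by
    rintro x y ⟨hx, hx'⟩ ⟨hy, hy'⟩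
    refine ⟨T.domain.add_mem hx hy, ?_⟩
    have : (⟨x + y, T.domain.add_mem hx hy⟩ : T.domain) = ⟨x, hx⟩ + ⟨y, hy⟩ := rfl
    rw [this, LinearPMap.map_add]
    exact S.domain.add_mem hx' hy'
  smul_mem' := by
    rintro c x ⟨hx, hx'⟩
    refine ⟨T.domain.smul_mem c hx, ?_⟩
    have : (⟨c • x, T.domain.smul_mem c hx⟩ : T.domain) = c • (⟨x, hx⟩ : T.domain) := rfl
    rw [this, LinearPMap.map_smul]
    exact S.domain.smul_mem c hx'

/-- Composition `S ∘ T` of partial operators, on the maximal domain. -/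
def pmapComp (S T : H →ₗ.[ℂ] H) : H →ₗ.[ℂ] H :=
  S.comp (T.domRestrict (compDomain S T)) (by
    rintro ⟨x, hx⟩
    have hxT : x ∈ T.domain := (Submodule.mem_inf.mp hx).2
    have hxD : x ∈ compDomain S T := (Submodule.mem_inf.mp hx).1
    exact (congrArg (· ∈ S.domain) (LinearPMap.domRestrict_apply
      (show ((⟨x, hx⟩ : ↥(compDomain S T ⊓ T.domain)) : H)
      = ((⟨x, hxT⟩ : T.domain) : H) from rfl))).mpr hxD.choose_spec)

/-- Powers of a partial operator: `pmapPow S n = Sⁿ` with its natural domain. -/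
def pmapPow (S : H →ₗ.[ℂ] H) : ℕ → (H →ₗ.[ℂ] H)
  | 0 => LinearMap.id.toPMap ⊤
  | n + 1 => pmapComp (pmapPow S n) S

open Classical in
/-- Total (junk-valued) application of the power `Sⁿ`. -/
def powApp (S : H →ₗ.[ℂ] H) (n : ℕ) (x : H) : H :=
  if h : x ∈ (pmapPow S n).domain then (pmapPow S n) ⟨x, h⟩ else 0

/-- The set of `C^∞`-vectors of `S`. -/
def Dinf (S : H →ₗ.[ℂ] H) : Set H := {x | ∀ n : ℕ, x ∈ (pmapPow S n).domain}

/-- `F` is a core of `S`. -/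
def IsCore (S : H →ₗ.[ℂ] H) (F : Submodule ℂ H) : Prop :=
  F ≤ S.domain ∧ (S.graph : Set (H × H)) ⊆ closure ((S.domRestrict F).graph : Set (H × H))

end Operators
section Operators
universe u
variable {H : Type u} [NormedAddCommGroup H] [InnerProductSpace ℂ H]

/-- A normal (unbounded) operator: closed, densely defined, with `D(N*) = D(N)` and
`‖N* x‖ = ‖N x‖` on the common domain. -/
def IsNormalOp [CompleteSpace H] (N : H →ₗ.[ℂ] H) : Prop :=
  Dense (N.domain : Set H) ∧ N.IsClosed ∧ N.adjoint.domain = N.domain ∧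
    ∀ (x : H) (hx : x ∈ N.domain) (hx' : x ∈ N.adjoint.domain),
      ‖N.adjoint ⟨x, hx'⟩‖ = ‖N ⟨x, hx⟩‖

/-- A subnormal operator: densely defined with a normal extension in a possibly
larger Hilbert space. -/
def IsSubnormal {H : Type u} [NormedAddCommGroup H] [InnerProductSpace ℂ H]
    (S : H →ₗ.[ℂ] H) : Prop :=
  Dense (S.domain : Set H) ∧
  ∃ (K : Type u) (_ : NormedAddCommGroup K) (_ : InnerProductSpace ℂ K) (_ : CompleteSpace K)
    (J : H →ₗᵢ[ℂ] K) (N : K →ₗ.[ℂ] K), IsNormalOp N ∧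
      ∀ x : S.domain, ∃ hx : J x ∈ N.domain, N ⟨J x, hx⟩ = J (S x)

/-- A hyponormal operator. -/
def IsHyponormal [CompleteSpace H] (S : H →ₗ.[ℂ] H) : Prop :=
  Dense (S.domain : Set H) ∧
  ∀ (x : H) (hx : x ∈ S.domain), ∃ hx' : x ∈ S.adjoint.domain,
      ‖S.adjoint ⟨x, hx'⟩‖ ≤ ‖S ⟨x, hx⟩‖

end Operators

/-- A directed tree on the vertex set `V`: a connected directed graph without circuits
in which every non-root vertex has a unique parent. -/
structure DirectedTree (V : Type*) where
  edge : V → V → Prop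
  connected : ∀ u v : V, Relation.ReflTransGen (fun a b => edge a b ∨ edge b a) u v
  no_circuits : ∀ v : V, ¬ Relation.TransGen edge v v
  parent_unique : ∀ u v w : V, edge v u → edge w u → v = w

namespace DirectedTree

variable {V : Type*}

/-- The roots: vertices with no incoming edge. -/
def isRoot (T : DirectedTree V) (v : V) : Prop := ¬ ∃ u : V, T.edge u v

/-- `V°`: the non-root vertices, i.e. vertices having a parent. -/
def nonRoot (T : DirectedTree V) (v : V) : Prop := ∃ u : V, T.edge u v

open Classical in
/-- The parent function (with junk value at roots). -/
def par (T : DirectedTree V) (v : V) : V := if h : ∃ u : V, T.edge u v then h.choose else v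

/-- The set of children of a vertex. -/
def chi (T : DirectedTree V) (u : V) : Set V := {v | T.edge u v}

/-- Iterated children `Chi^n(u)`. -/
def chiN (T : DirectedTree V) : ℕ → V → Set V
  | 0, u => {u}
  | n + 1, u => ⋃ w ∈ T.chiN n u, T.chi w

/-- The descendants of `u`. -/
def des (T : DirectedTree V) (u : V) : Set V := ⋃ n : ℕ, T.chiN n u

/-- `T` is leafless: every vertex has a child. -/
def Leafless (T : DirectedTree V) : Prop := ∀ u : V, ∃ v : V, T.edge u v

/-- The product `λ_{u∣v} = ∏_{j=0}^{n-1} λ_{par^j(v)}` of the weights along the path of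
length `n` ending at `v` (for `v ∈ Chi^n(u)` this is the usual `λ_{u∣v}`). -/
def pathProd (T : DirectedTree V) (lam : V → ℂ) (n : ℕ) (v : V) : ℂ :=
  ∏ j ∈ Finset.range n, lam (T.par^[j] v)

open Classical in
/-- The formal weighted-shift transformation `Λ_T` on families of complex numbers. -/
def lamMap (T : DirectedTree V) (lam : V → ℂ) (f : V → ℂ) : V → ℂ :=
  fun v => if T.nonRoot v then lam v * f (T.par v) else 0

variable (T : DirectedTree V)

theorem lamMap_add (lam : V → ℂ) (f g : V → ℂ) :
    T.lamMap lam (f + g) = T.lamMap lam f + T.lamMap lam g := by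
  funext v; simp only [lamMap, Pi.add_apply]; split <;> ring

theorem lamMap_smul (lam : V → ℂ) (c : ℂ) (f : V → ℂ) :
    T.lamMap lam (c • f) = c • T.lamMap lam f := by
  funext v; simp only [lamMap, Pi.smul_apply, smul_eq_mul]; split <;> ring

theorem lamMap_zero (lam : V → ℂ) : T.lamMap lam (0 : V → ℂ) = 0 := by
  funext v; simp [lamMap]

/-- The domain of the weighted shift `S_λ`. -/
def shiftDomain (lam : V → ℂ) : Submodule ℂ (lp (fun _ : V => ℂ) 2) where
  carrier := {f | Memℓp (T.lamMap lam f) 2}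
  zero_mem' := by
    rw [Set.mem_setOf_eq, lp.coeFn_zero, lamMap_zero]
    exact zero_memℓp
  add_mem' := by
    intro f g hf hg
    rw [Set.mem_setOf_eq, lp.coeFn_add, lamMap_add]
    exact hf.add hg
  smul_mem' := by
    intro c f hf
    rw [Set.mem_setOf_eq, lp.coeFn_smul, lamMap_smul]
    exact hf.const_smul c

/-- The weighted shift `S_λ` on the directed tree `T`, as a partial operator in `ℓ²(V)`. -/
def shift (lam : V → ℂ) : lp (fun _ : V => ℂ) 2 →ₗ.[ℂ] lp (fun _ : V => ℂ) 2 where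
  domain := T.shiftDomain lam
  toFun :=
    { toFun := fun f => (⟨T.lamMap lam f, f.2⟩ : lp (fun _ : V => ℂ) 2)
      map_add' := by
        rintro f g
        apply lp.ext
        rw [lp.coeFn_add]
        show T.lamMap lam
            ((((f : lp (fun _ : V => ℂ) 2) : V → ℂ)) + (((g : lp (fun _ : V => ℂ) 2) : V → ℂ)))
          = T.lamMap lam ((f : lp (fun _ : V => ℂ) 2) : V → ℂ)
            + T.lamMap lam ((g : lp (fun _ : V => ℂ) 2) : V → ℂ)
        exact T.lamMap_add lam _ _
      map_smul' := by
        rintro c f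
        apply lp.ext
        rw [lp.coeFn_smul]
        show T.lamMap lam (c • (((f : lp (fun _ : V => ℂ) 2) : V → ℂ)))
          = c • T.lamMap lam ((f : lp (fun _ : V => ℂ) 2) : V → ℂ)
        exact T.lamMap_smul lam c _ }

end DirectedTree

open Classical in
/-- The basis vector `e_u` of `ℓ²(V)`. -/
def eVec {V : Type*} (u : V) : lp (fun _ : V => ℂ) 2 := lp.single 2 u 1

section MoreDefs
universe u
variable {H : Type u} [NormedAddCommGroup H] [InnerProductSpace ℂ H]

/-- The inner product, linear in the FIRST argument (the paper's convention). -/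
def innerPaper (x y : H) : ℂ := inner ℂ y x

/-- The moment sequence `n ↦ ‖Sⁿ f‖²` generated by the vector `f`. -/
def momentSeq (S : H →ₗ.[ℂ] H) (f : H) : ℕ → ℝ := fun n => ‖powApp S n f‖ ^ 2

/-- `f` is a quasi-analytic vector of `S` : `f ∈ D^∞(S)` and
`∑ₙ ‖Sⁿ f‖^{-1/n} = ∞` (with `1/0 = ∞`). -/
def IsQuasiAnalyticVec (S : H →ₗ.[ℂ] H) (f : H) : Prop :=
  (∀ n : ℕ, f ∈ (pmapPow S n).domain) ∧
  ∑' n : ℕ, ((‖powApp S (n + 1) f‖₊ ^ ((1 : ℝ) / (n + 1)) : ℝ≥0) : ℝ≥0∞)⁻¹ = ∞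

end MoreDefs

/-- The consistency condition `μ_u(σ) = ∑_{v ∈ Chi(u)} |λ_v|² ∫_σ (1/s) dμ_v(s) + ε_u δ₀(σ)`
at the vertex `u` (with the convention `1/0 = ∞`). -/
def consistentAt {V : Type*} (T : DirectedTree V) (lam : V → ℂ) (μ : V → MeasureTheory.Measure ℝ≥0)
    (ε : V → ℝ≥0) (u : V) : Prop :=
  ∀ σ : Set ℝ≥0, MeasurableSet σ →
    μ u σ = (∑' v : {v : V // T.edge u v},
        (‖lam (v : V)‖₊ : ℝ≥0∞) ^ 2 * ∫⁻ s in σ, ((s : ℝ≥0∞))⁻¹ ∂(μ (v : V)))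
      + (ε u : ℝ≥0∞) * MeasureTheory.Measure.dirac (0 : ℝ≥0) σ

/-- The sequence `{ϑ, t₀, t₁, t₂, …}` obtained by prepending `ϑ` to `t`. -/
def shiftedSeq (ϑ : ℝ) (t : ℕ → ℝ) : ℕ → ℝ := fun n => match n with
  | 0 => ϑ
  | n + 1 => t n

/-- A positive definite sequence of real numbers. -/
def IsPosDefSeq (t : ℕ → ℝ) : Prop :=
  ∀ (n : ℕ) (α : ℕ → ℂ),
    0 ≤ (∑ k ∈ Finset.range (n + 1), ∑ l ∈ Finset.range (n + 1),
        (t (k + l) : ℂ) * α k * (starRingEnd ℂ) (α l)).re ∧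
    (∑ k ∈ Finset.range (n + 1), ∑ l ∈ Finset.range (n + 1),
        (t (k + l) : ℂ) * α k * (starRingEnd ℂ) (α l)).im = 0


/-- The map `μ ↦ ν_μ` from Lemma 2.1. -/
def nuMap (ϑ : ℝ) (μ : Measure ℝ≥0) : Measure ℝ≥0 :=
  μ.withDensity (fun s => ((s : ℝ≥0∞))⁻¹)
    + (ENNReal.ofReal ϑ - ∫⁻ s, ((s : ℝ≥0∞))⁻¹ ∂μ) • Measure.dirac (0 : ℝ≥0)

/-- The map `ν ↦ μ_ν` from Lemma 2.1. -/
def muMap (ν : Measure ℝ≥0) : Measure ℝ≥0 := ν.withDensity fun s => (s : ℝ≥0∞)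

section Helpers21

private lemma measPow (n : ℕ) : Measurable fun s : ℝ≥0 => ((s : ℝ≥0∞)) ^ n :=
  measurable_coe_nnreal_ennreal.pow_const n

private lemma measInv : Measurable fun s : ℝ≥0 => ((s : ℝ≥0∞))⁻¹ :=
  measurable_coe_nnreal_ennreal.inv

private lemma ofReal_pow_eq (s : ℝ≥0) (n : ℕ) :
    ENNReal.ofReal ((s : ℝ) ^ n) = (s : ℝ≥0∞) ^ n := by
  rw [ENNReal.ofReal_pow s.coe_nonneg, ENNReal.ofReal_coe_nnreal]

private lemma rep_iff (μ : Measure ℝ≥0) (t : ℕ → ℝ) :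
    IsRepMeasure μ t ↔ ∀ n : ℕ, 0 ≤ t n ∧
      (∫⁻ s, ((s : ℝ≥0∞)) ^ n ∂μ) = ENNReal.ofReal (t n) := by
  constructor
  · intro h n
    obtain ⟨hint, htn⟩ := h n
    have hnn : 0 ≤ᵐ[μ] fun s : ℝ≥0 => (s : ℝ) ^ n :=
      Filter.Eventually.of_forall fun s => pow_nonneg s.coe_nonneg n
    have h0 : 0 ≤ t n := htn ▸ integral_nonneg fun s => pow_nonneg s.coe_nonneg n
    refine ⟨h0, ?_⟩
    have h1 := ofReal_integral_eq_lintegral_ofReal hint hnn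
    calc ∫⁻ s, ((s : ℝ≥0∞)) ^ n ∂μ = ∫⁻ s, ENNReal.ofReal ((s : ℝ) ^ n) ∂μ := by
          exact lintegral_congr fun s => (ofReal_pow_eq s n).symm
      _ = ENNReal.ofReal (t n) := by rw [← h1, htn]
  · intro h n
    obtain ⟨h0, hl⟩ := h n
    have hsm : AEStronglyMeasurable (fun s : ℝ≥0 => (s : ℝ) ^ n) μ :=
      (NNReal.continuous_coe.pow n).aestronglyMeasurable
    have hnn : 0 ≤ᵐ[μ] fun s : ℝ≥0 => (s : ℝ) ^ n :=
      Filter.Eventually.of_forall fun s => pow_nonneg s.coe_nonneg n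
    have hfin : HasFiniteIntegral (fun s : ℝ≥0 => (s : ℝ) ^ n) μ := by
      rw [hasFiniteIntegral_iff_ofReal hnn]
      calc ∫⁻ s, ENNReal.ofReal ((s : ℝ) ^ n) ∂μ = ∫⁻ s, ((s : ℝ≥0∞)) ^ n ∂μ :=
            lintegral_congr fun s => ofReal_pow_eq s n
        _ = ENNReal.ofReal (t n) := hl
        _ < ∞ := ofReal_lt_top
    refine ⟨⟨hsm, hfin⟩, ?_⟩
    rw [integral_eq_lintegral_of_nonneg_ae hnn hsm]
    have : ∫⁻ s, ENNReal.ofReal ((s : ℝ) ^ n) ∂μ = ENNReal.ofReal (t n) := by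
      rw [← hl]; exact lintegral_congr fun s => ofReal_pow_eq s n
    rw [this, ENNReal.toReal_ofReal h0]

private lemma coe_ne_zero' {s : ℝ≥0} (hs : s ≠ 0) : ((s : ℝ≥0∞)) ≠ 0 :=
  ENNReal.coe_ne_zero.mpr hs

private lemma part1 (t : ℕ → ℝ) (ϑ : ℝ) (hϑ : 0 < ϑ) (μ : Measure ℝ≥0)
    (hμ : IsRepMeasure μ t) (hc : (∫⁻ s, ((s : ℝ≥0∞))⁻¹ ∂μ) ≤ ENNReal.ofReal ϑ) :
    IsRepMeasure (nuMap ϑ μ) (shiftedSeq ϑ t) ∧ muMap (nuMap ϑ μ) = μ := by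
  set c := ∫⁻ s, ((s : ℝ≥0∞))⁻¹ ∂μ with hcdef
  have hcne : c ≠ ∞ := (lt_of_le_of_lt hc ofReal_lt_top).ne
  have h0 : μ {0} = 0 := by
    by_contra h
    have hs : ∫⁻ s in {(0 : ℝ≥0)}, ((s : ℝ≥0∞))⁻¹ ∂μ = ∞ := by
      rw [lintegral_singleton]
      simp [ENNReal.top_mul h]
    exact hcne (top_le_iff.mp (hs ▸ setLIntegral_le_lintegral _ _))
  have hrep := (rep_iff μ t).mp hμ
  have hlint : ∀ g : ℝ≥0 → ℝ≥0∞, Measurable g →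
      ∫⁻ s, g s ∂(nuMap ϑ μ)
        = (∫⁻ s, ((s : ℝ≥0∞))⁻¹ * g s ∂μ) + (ENNReal.ofReal ϑ - c) * g 0 := by
    intro g hg
    rw [nuMap, lintegral_add_measure, lintegral_smul_measure, lintegral_dirac,
      lintegral_withDensity_eq_lintegral_mul μ measInv hg]
    rfl
  constructor
  · rw [rep_iff]
    intro n
    match n with
    | 0 =>
      refine ⟨le_of_lt hϑ, ?_⟩
      show (∫⁻ s, ((s : ℝ≥0∞)) ^ 0 ∂(nuMap ϑ μ)) = ENNReal.ofReal ϑ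
      have h1 : (∫⁻ s, ((s : ℝ≥0∞)) ^ 0 ∂(nuMap ϑ μ))
          = ∫⁻ s, (fun _ : ℝ≥0 => (1 : ℝ≥0∞)) s ∂(nuMap ϑ μ) := by
        exact lintegral_congr fun s => pow_zero _
      rw [h1, hlint (fun _ => 1) measurable_const, mul_one]
      have h2 : ∫⁻ s, ((s : ℝ≥0∞))⁻¹ * (fun _ : ℝ≥0 => (1 : ℝ≥0∞)) s ∂μ = c := by
        simp [hcdef]
      rw [h2, add_tsub_cancel_of_le hc]
    | n + 1 =>
      refine ⟨(hrep n).1, ?_⟩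
      have hg := hlint (fun s => ((s : ℝ≥0∞)) ^ (n + 1)) (measPow (n + 1))
      have hz : (((0 : ℝ≥0) : ℝ≥0∞) ^ (n + 1)) = 0 := by simp
      rw [show shiftedSeq ϑ t (n + 1) = t n from rfl, hg, hz, mul_zero, add_zero]
      have hae : (fun s : ℝ≥0 => ((s : ℝ≥0∞))⁻¹ * ((s : ℝ≥0∞)) ^ (n + 1))
          =ᵐ[μ] fun s : ℝ≥0 => ((s : ℝ≥0∞)) ^ n := by
        have hsub : {s : ℝ≥0 |
            ¬ ((s : ℝ≥0∞))⁻¹ * ((s : ℝ≥0∞)) ^ (n + 1) = ((s : ℝ≥0∞)) ^ n} ⊆ {0} := by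
          intro s hs
          simp only [Set.mem_setOf_eq] at hs
          by_contra hs0
          have hne : ((s : ℝ≥0∞)) ≠ 0 := coe_ne_zero' (by simpa using hs0)
          exact hs (by
            rw [pow_succ', ← mul_assoc, ENNReal.inv_mul_cancel hne coe_ne_top, one_mul])
        exact ae_iff.mpr (measure_mono_null hsub h0)
      exact (lintegral_congr_ae hae).trans (hrep n).2
  · rw [muMap, nuMap, withDensity_add_measure, withDensity_smul_measure]
    have hd : (Measure.dirac (0 : ℝ≥0)).withDensity (fun s => ((s : ℝ≥0∞))) = 0 := by
      classical
      ext σ hσ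
      rw [withDensity_apply _ hσ, setLIntegral_dirac]
      split <;> simp
    rw [hd, smul_zero, add_zero,
      ← withDensity_mul μ measInv measurable_coe_nnreal_ennreal]
    have hae : (fun s : ℝ≥0 => ((s : ℝ≥0∞))⁻¹ * ((s : ℝ≥0∞))) =ᵐ[μ] (1 : ℝ≥0 → ℝ≥0∞) := by
      have hsub : {s : ℝ≥0 | ¬ ((s : ℝ≥0∞))⁻¹ * ((s : ℝ≥0∞)) = (1 : ℝ≥0 → ℝ≥0∞) s} ⊆ {0} := by
        intro s hs
        simp only [Set.mem_setOf_eq] at hs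
        by_contra hs0
        have hne : ((s : ℝ≥0∞)) ≠ 0 := coe_ne_zero' (by simpa using hs0)
        exact hs (ENNReal.inv_mul_cancel hne coe_ne_top)
      exact ae_iff.mpr (measure_mono_null hsub h0)
    exact (withDensity_congr_ae hae).trans withDensity_one

private lemma part2 (t : ℕ → ℝ) (ϑ : ℝ) (hϑ : 0 < ϑ) (ν : Measure ℝ≥0)
    (hν : IsRepMeasure ν (shiftedSeq ϑ t)) :
    IsRepMeasure (muMap ν) t ∧ (∫⁻ s, ((s : ℝ≥0∞))⁻¹ ∂(muMap ν)) ≤ ENNReal.ofReal ϑ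
      ∧ nuMap ϑ (muMap ν) = ν := by
  have hrep := (rep_iff ν (shiftedSeq ϑ t)).mp hν
  have hνu : ν Set.univ = ENNReal.ofReal ϑ := by
    have h := (hrep 0).2
    have h1 : ∫⁻ s, ((s : ℝ≥0∞)) ^ 0 ∂ν = ν Set.univ := by
      rw [← lintegral_one]; exact lintegral_congr fun s => pow_zero _
    exact h1.symm.trans h
  have hμl : ∀ n : ℕ, ∫⁻ s, ((s : ℝ≥0∞)) ^ n ∂(muMap ν)
      = ∫⁻ s, ((s : ℝ≥0∞)) ^ (n + 1) ∂ν := by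
    intro n
    rw [muMap, lintegral_withDensity_eq_lintegral_mul ν measurable_coe_nnreal_ennreal (measPow n)]
    exact lintegral_congr fun s => by
      show ((s : ℝ≥0∞)) * ((s : ℝ≥0∞)) ^ n = ((s : ℝ≥0∞)) ^ (n + 1)
      exact (pow_succ' _ _).symm
  have hinv : ∫⁻ s, ((s : ℝ≥0∞))⁻¹ ∂(muMap ν) = ν ({(0 : ℝ≥0)}ᶜ) := by
    rw [muMap, lintegral_withDensity_eq_lintegral_mul ν measurable_coe_nnreal_ennreal measInv]
    have hpt : ∀ s : ℝ≥0, ((s : ℝ≥0∞)) * ((s : ℝ≥0∞))⁻¹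
        = Set.indicator ({(0 : ℝ≥0)}ᶜ) (1 : ℝ≥0 → ℝ≥0∞) s := by
      intro s
      by_cases hs : s = 0
      · subst hs; simp
      · have hne : ((s : ℝ≥0∞)) ≠ 0 := coe_ne_zero' hs
        rw [ENNReal.mul_inv_cancel hne coe_ne_top,
          Set.indicator_of_mem (by simpa using hs) (1 : ℝ≥0 → ℝ≥0∞)]
        rfl
    exact (lintegral_congr fun s => hpt s).trans
      (lintegral_indicator_one (measurableSet_singleton (0 : ℝ≥0)).compl)
  have hbound : (∫⁻ s, ((s : ℝ≥0∞))⁻¹ ∂(muMap ν)) ≤ ENNReal.ofReal ϑ := by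
    rw [hinv, ← hνu]
    exact measure_mono (Set.subset_univ _)
  refine ⟨?_, hbound, ?_⟩
  · rw [rep_iff]
    intro n
    refine ⟨(hrep (n + 1)).1, ?_⟩
    rw [hμl n]
    exact (hrep (n + 1)).2
  · rw [nuMap, hinv]
    have hwd : (muMap ν).withDensity (fun s => ((s : ℝ≥0∞))⁻¹) = ν.restrict ({(0 : ℝ≥0)}ᶜ) := by
      rw [muMap, ← withDensity_mul ν measurable_coe_nnreal_ennreal measInv]
      have hpt : (fun s : ℝ≥0 => ((s : ℝ≥0∞)) * ((s : ℝ≥0∞))⁻¹)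
          =ᵐ[ν] Set.indicator ({(0 : ℝ≥0)}ᶜ) (1 : ℝ≥0 → ℝ≥0∞) := by
        refine Filter.Eventually.of_forall fun s => ?_
        show ((s : ℝ≥0∞)) * ((s : ℝ≥0∞))⁻¹
          = Set.indicator ({(0 : ℝ≥0)}ᶜ) (1 : ℝ≥0 → ℝ≥0∞) s
        by_cases hs : s = 0
        · subst hs; simp
        · have hne : ((s : ℝ≥0∞)) ≠ 0 := coe_ne_zero' hs
          rw [ENNReal.mul_inv_cancel hne coe_ne_top,
            Set.indicator_of_mem (by simpa using hs) (1 : ℝ≥0 → ℝ≥0∞)]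
          rfl
      exact (withDensity_congr_ae hpt).trans
        (withDensity_indicator_one (measurableSet_singleton (0 : ℝ≥0)).compl)
    rw [hwd]
    have hνfin : ν ({(0 : ℝ≥0)}ᶜ) ≠ ∞ :=
      (lt_of_le_of_lt (le_trans (measure_mono (Set.subset_univ _)) hνu.le) ofReal_lt_top).ne
    have hsub : ENNReal.ofReal ϑ - ν ({(0 : ℝ≥0)}ᶜ) = ν {0} := by
      refine ENNReal.sub_eq_of_eq_add hνfin ?_
      rw [← hνu]
      exact (measure_add_measure_compl (measurableSet_singleton (0 : ℝ≥0))).symm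
    rw [hsub]
    ext σ hσ
    rw [Measure.add_apply, Measure.restrict_apply hσ, Measure.smul_apply, smul_eq_mul,
      Measure.dirac_apply' _ hσ]
    by_cases h0σ : (0 : ℝ≥0) ∈ σ
    · rw [Set.indicator_of_mem h0σ, Pi.one_apply, mul_one]
      have h1 : σ ∩ {(0 : ℝ≥0)}ᶜ = σ \ {0} := rfl
      have h2 : ν {0} = ν (σ ∩ {0}) := by
        rw [Set.inter_eq_right.mpr (Set.singleton_subset_iff.mpr h0σ)]
      rw [h1, h2, add_comm]
      exact measure_inter_add_diff σ (measurableSet_singleton (0 : ℝ≥0))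
    · have hsσ : σ ∩ {(0 : ℝ≥0)}ᶜ = σ :=
        Set.inter_eq_left.mpr fun x hx hx0 =>
          h0σ (by rw [Set.mem_singleton_iff] at hx0; exact hx0 ▸ hx)
      rw [Set.indicator_of_notMem h0σ, mul_zero, add_zero, hsσ]

end Helpers21

/-- the bijection `M₀(ϑ) ∋ μ ↦ ν_μ ∈ M₋₁(ϑ)` with inverse `ν ↦ μ_ν`,
and the determinacy statement. -/
theorem stmt1 (t : ℕ → ℝ) (ht : IsStieltjesMoment t) (ϑ : ℝ) (hϑ : 0 < ϑ)
    (hsh : IsStieltjesMoment (shiftedSeq ϑ t)) :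
    (∀ μ : Measure ℝ≥0, IsRepMeasure μ t → (∫⁻ s, ((s : ℝ≥0∞))⁻¹ ∂μ) ≤ ENNReal.ofReal ϑ →
      IsRepMeasure (nuMap ϑ μ) (shiftedSeq ϑ t) ∧ muMap (nuMap ϑ μ) = μ)
    ∧ (∀ ν : Measure ℝ≥0, IsRepMeasure ν (shiftedSeq ϑ t) →
      IsRepMeasure (muMap ν) t ∧ (∫⁻ s, ((s : ℝ≥0∞))⁻¹ ∂(muMap ν)) ≤ ENNReal.ofReal ϑ
        ∧ nuMap ϑ (muMap ν) = ν)
    ∧ (IsDetStieltjesMoment t →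
        IsDetStieltjesMoment (shiftedSeq ϑ t)
        ∧ ∀ μ : Measure ℝ≥0, IsRepMeasure μ t →
            (∫⁻ s, ((s : ℝ≥0∞))⁻¹ ∂μ) ≤ ENNReal.ofReal ϑ
            ∧ ∀ ν : Measure ℝ≥0, IsRepMeasure ν (shiftedSeq ϑ t) → ν = nuMap ϑ μ) := by
  refine ⟨fun μ hμ hc => part1 t ϑ hϑ μ hμ hc, fun ν hν => part2 t ϑ hϑ ν hν, fun hdet => ?_⟩
  obtain ⟨μ₀, hμ₀, huniq⟩ := hdet
  obtain ⟨ν₀, hν₀⟩ := hsh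
  obtain ⟨hrep₀, hb₀, hnm₀⟩ := part2 t ϑ hϑ ν₀ hν₀
  have hμeq : muMap ν₀ = μ₀ := huniq _ hrep₀
  have hb : (∫⁻ s, ((s : ℝ≥0∞))⁻¹ ∂μ₀) ≤ ENNReal.ofReal ϑ := hμeq ▸ hb₀
  have key : ∀ ν : Measure ℝ≥0, IsRepMeasure ν (shiftedSeq ϑ t) → ν = nuMap ϑ μ₀ := by
    intro ν hν
    obtain ⟨hrep, hbν, hnm⟩ := part2 t ϑ hϑ ν hν
    rw [← hnm, huniq _ hrep]
  refine ⟨⟨nuMap ϑ μ₀, (part1 t ϑ hϑ μ₀ hμ₀ hb).1, key⟩, fun μ hμ => ?_⟩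
  have hμμ : μ = μ₀ := huniq _ hμ
  subst hμμ
  exact ⟨hb, key⟩


end
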